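/- The pullback h_1 = H_1 ∘ Ψ of H_1(u) = Σ u_i under the Volterra map equals Σ_{i=1}^{2n-1} exp(p_i + (1/2)(q_{i+1} - q_{i-1})), and h_1 Poisson-commutes with h_2 = (1/2)Σ_{i=1}^{2n-1} exp(2p_i + q_{i+1} - q_{i-1}) + Σ_{i=1}^{2n-2} exp(p_i + p_{i+1} + (1/2)(q_{i+2} + q_{i+1} - q_i - q_{i-1})) with respect to the canonical bracket on ℝ^{2(2n-1)}: {h_1, h_2} = 0. -/

import Mathlib

/-- The Volterra map component: `uᵢ(q,p) = exp(pᵢ + (1/2)(qᵢ₊₁ - qᵢ₋₁))`. -/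
noncomputable def volterraU (q p : ℕ → ℝ) (i : ℕ) : ℝ :=
  Real.exp (p i + (q (i + 1) - q (i - 1)) / 2)

/-- `h₁(q,p) = ∑_{i=1}^{2n-1} exp(pᵢ + (1/2)(qᵢ₊₁ - qᵢ₋₁))`. -/
noncomputable def h1Ham (n : ℕ) (q p : ℕ → ℝ) : ℝ :=
  ∑ i ∈ Finset.Icc 1 (2 * n - 1), Real.exp (p i + (q (i + 1) - q (i - 1)) / 2)

/-- `h₂ = (1/2)∑ᵢ exp(2pᵢ + qᵢ₊₁ - qᵢ₋₁) + ∑ᵢ exp(pᵢ + pᵢ₊₁ + (1/2)(qᵢ₊₂ + qᵢ₊₁ - qᵢ - qᵢ₋₁))`. -/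
noncomputable def h2Ham (n : ℕ) (q p : ℕ → ℝ) : ℝ :=
  (1 / 2) * ∑ i ∈ Finset.Icc 1 (2 * n - 1), Real.exp (2 * p i + q (i + 1) - q (i - 1))
  + ∑ i ∈ Finset.Icc 1 (2 * n - 2),
      Real.exp (p i + p (i + 1) + (q (i + 2) + q (i + 1) - q i - q (i - 1)) / 2)

/-- boundary-truncated Volterra variable -/
noncomputable def aa (n : ℕ) (q p : ℕ → ℝ) (i : ℕ) : ℝ :=
  if i ∈ Finset.Icc 1 (2 * n - 1) then Real.exp (p i + (q (i + 1) - q (i - 1)) / 2) else 0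

lemma aa_sq (n : ℕ) (q p : ℕ → ℝ) (j : ℕ) :
    (if j ∈ Finset.Icc 1 (2 * n - 1) then Real.exp (2 * p j + q (j + 1) - q (j - 1)) else 0)
      = aa n q p j ^ 2 := by
  by_cases hj : j ∈ Finset.Icc 1 (2 * n - 1)
  · rw [if_pos hj]; rw [aa, if_pos hj, sq, ← Real.exp_add]; congr 1; ring
  · rw [if_neg hj]; rw [aa, if_neg hj]; ring

lemma aa_mul (n : ℕ) (q p : ℕ → ℝ) (j : ℕ) :
    (if j ∈ Finset.Icc 1 (2 * n - 2) then
        Real.exp (p j + p (j + 1) + (q (j + 2) + q (j + 1) - q j - q (j - 1)) / 2) else 0)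
      = aa n q p j * aa n q p (j + 1) := by
  by_cases h : j ∈ Finset.Icc 1 (2 * n - 2)
  · simp only [Finset.mem_Icc] at h
    have m1 : j ∈ Finset.Icc 1 (2 * n - 1) := Finset.mem_Icc.mpr ⟨h.1, by omega⟩
    have m2 : j + 1 ∈ Finset.Icc 1 (2 * n - 1) := Finset.mem_Icc.mpr ⟨by omega, by omega⟩
    rw [if_pos (Finset.mem_Icc.mpr h), aa, if_pos m1, aa, if_pos m2, ← Real.exp_add]
    congr 1
    rw [show j + 1 - 1 = j from by omega, show j + 1 + 1 = j + 2 from by omega]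
    ring
  · rw [if_neg h]
    simp only [Finset.mem_Icc] at h
    rcases Nat.eq_zero_or_pos j with rfl | hj1
    · simp [aa]
    · have : aa n q p (j + 1) = 0 := by
        rw [aa, if_neg]; simp only [Finset.mem_Icc]; omega
      rw [this, mul_zero]

lemma derivq_h1 (n : ℕ) (q p : ℕ → ℝ) (k : ℕ) (hk : k ∈ Finset.Icc 1 (2 * n - 1)) :
    deriv (fun x => h1Ham n (Function.update q k x) p) (q k)
      = (aa n q p (k - 1) - aa n q p (k + 1)) / 2 := by
  simp only [Finset.mem_Icc] at hk
  have hfun : (fun x => h1Ham n (Function.update q k x) p)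
      = fun x => ∑ i ∈ Finset.Icc 1 (2 * n - 1),
          Real.exp (p i + ((if i + 1 = k then x else q (i + 1))
            - (if i - 1 = k then x else q (i - 1))) / 2) := by
    funext x; simp only [h1Ham, Function.update_apply]
  rw [hfun]
  have key : ∀ i ∈ Finset.Icc 1 (2 * n - 1), HasDerivAt
      (fun x => Real.exp (p i + ((if i + 1 = k then x else q (i + 1))
            - (if i - 1 = k then x else q (i - 1))) / 2))
      (((if i = k - 1 then Real.exp (p i + (q (i + 1) - q (i - 1)) / 2) else 0)
        - (if i = k + 1 then Real.exp (p i + (q (i + 1) - q (i - 1)) / 2) else 0)) / 2)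
      (q k) := by
    intro i hi
    simp only [Finset.mem_Icc] at hi
    by_cases h1 : i + 1 = k
    · have h2 : ¬ (i - 1 = k) := by omega
      have hf : (fun x => Real.exp (p i + ((if i + 1 = k then x else q (i + 1))
            - (if i - 1 = k then x else q (i - 1))) / 2))
          = fun x => Real.exp (p i + (x - q (i - 1)) / 2) := by
        funext x; rw [if_pos h1, if_neg h2]
      rw [hf, if_pos (show i = k - 1 by omega), if_neg (show ¬ i = k + 1 by omega)]
      have H : HasDerivAt (fun x => Real.exp (p i + (x - q (i - 1)) / 2))
          (Real.exp (p i + (q k - q (i - 1)) / 2) * (1 / 2)) (q k) :=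
        ((((hasDerivAt_id' (q k)).sub_const (q (i - 1))).div_const 2).const_add (p i)).exp
      convert H using 1
      rw [← h1]; ring
    · by_cases h2 : i - 1 = k
      · have hf : (fun x => Real.exp (p i + ((if i + 1 = k then x else q (i + 1))
              - (if i - 1 = k then x else q (i - 1))) / 2))
            = fun x => Real.exp (p i + (q (i + 1) - x) / 2) := by
          funext x; rw [if_neg h1, if_pos h2]
        rw [hf, if_neg (show ¬ i = k - 1 by omega), if_pos (show i = k + 1 by omega)]
        have H : HasDerivAt (fun x => Real.exp (p i + (q (i + 1) - x) / 2))
            (Real.exp (p i + (q (i + 1) - q k) / 2) * (-1 / 2)) (q k) :=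
          ((((hasDerivAt_id' (q k)).const_sub (q (i + 1))).div_const 2).const_add (p i)).exp
        convert H using 1
        rw [← h2]; ring
      · have hf : (fun x => Real.exp (p i + ((if i + 1 = k then x else q (i + 1))
              - (if i - 1 = k then x else q (i - 1))) / 2))
            = fun _ => Real.exp (p i + (q (i + 1) - q (i - 1)) / 2) := by
          funext x; rw [if_neg h1, if_neg h2]
        rw [hf, if_neg (show ¬ i = k - 1 by omega), if_neg (show ¬ i = k + 1 by omega)]
        simpa using hasDerivAt_const (q k) (Real.exp (p i + (q (i + 1) - q (i - 1)) / 2))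
  rw [(HasDerivAt.fun_sum key).deriv, ← Finset.sum_div, Finset.sum_sub_distrib,
    Finset.sum_ite_eq', Finset.sum_ite_eq']
  simp only [aa]

lemma derivp_h1 (n : ℕ) (q p : ℕ → ℝ) (k : ℕ) :
    deriv (fun x => h1Ham n q (Function.update p k x)) (p k) = aa n q p k := by
  have hfun : (fun x => h1Ham n q (Function.update p k x))
      = fun x => ∑ i ∈ Finset.Icc 1 (2 * n - 1),
          Real.exp ((if i = k then x else p i) + (q (i + 1) - q (i - 1)) / 2) := by
    funext x; simp only [h1Ham, Function.update_apply]
  rw [hfun]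
  have key : ∀ i ∈ Finset.Icc 1 (2 * n - 1), HasDerivAt
      (fun x => Real.exp ((if i = k then x else p i) + (q (i + 1) - q (i - 1)) / 2))
      (if i = k then Real.exp (p i + (q (i + 1) - q (i - 1)) / 2) else 0) (p k) := by
    intro i _
    by_cases h : i = k
    · have hf : (fun x => Real.exp ((if i = k then x else p i) + (q (i + 1) - q (i - 1)) / 2))
          = fun x => Real.exp (x + (q (i + 1) - q (i - 1)) / 2) := by
        funext x; rw [if_pos h]
      rw [hf, if_pos h]
      have H : HasDerivAt (fun x => Real.exp (x + (q (i + 1) - q (i - 1)) / 2))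
          (Real.exp (p k + (q (i + 1) - q (i - 1)) / 2) * 1) (p k) :=
        ((hasDerivAt_id' (p k)).add_const _).exp
      convert H using 1
      rw [← h]; ring
    · have hf : (fun x => Real.exp ((if i = k then x else p i) + (q (i + 1) - q (i - 1)) / 2))
          = fun _ => Real.exp (p i + (q (i + 1) - q (i - 1)) / 2) := by
        funext x; rw [if_neg h]
      rw [hf, if_neg h]
      simpa using hasDerivAt_const (p k) (Real.exp (p i + (q (i + 1) - q (i - 1)) / 2))
  rw [(HasDerivAt.fun_sum key).deriv, Finset.sum_ite_eq']
  simp only [aa]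

lemma derivp_h2 (n : ℕ) (q p : ℕ → ℝ) (k : ℕ) (hk : k ∈ Finset.Icc 1 (2 * n - 1)) :
    deriv (fun x => h2Ham n q (Function.update p k x)) (p k)
      = aa n q p k ^ 2 + (aa n q p k * aa n q p (k + 1)
          + aa n q p (k - 1) * aa n q p (k - 1 + 1)) := by
  have hk' := Finset.mem_Icc.mp hk
  have hfun : (fun x => h2Ham n q (Function.update p k x))
      = fun x =>
        (1 / 2) * ∑ i ∈ Finset.Icc 1 (2 * n - 1),
            Real.exp (2 * (if i = k then x else p i) + q (i + 1) - q (i - 1))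
        + ∑ i ∈ Finset.Icc 1 (2 * n - 2),
            Real.exp ((if i = k then x else p i) + (if i + 1 = k then x else p (i + 1))
              + (q (i + 2) + q (i + 1) - q i - q (i - 1)) / 2) := by
    funext x; simp only [h2Ham, Function.update_apply]
  rw [hfun]
  have key1 : ∀ i ∈ Finset.Icc 1 (2 * n - 1), HasDerivAt
      (fun x => Real.exp (2 * (if i = k then x else p i) + q (i + 1) - q (i - 1)))
      (if i = k then 2 * Real.exp (2 * p i + q (i + 1) - q (i - 1)) else 0) (p k) := by
    intro i _
    by_cases h : i = k
    · have hf : (fun x => Real.exp (2 * (if i = k then x else p i) + q (i + 1) - q (i - 1)))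
          = fun x => Real.exp (2 * x + q (i + 1) - q (i - 1)) := by
        funext x; rw [if_pos h]
      rw [hf, if_pos h]
      have H : HasDerivAt (fun x => Real.exp (2 * x + q (i + 1) - q (i - 1)))
          (Real.exp (2 * p k + q (i + 1) - q (i - 1)) * (2 * 1)) (p k) :=
        ((((hasDerivAt_id' (p k)).const_mul 2).add_const (q (i + 1))).sub_const (q (i - 1))).exp
      convert H using 1
      rw [← h]; ring
    · have hf : (fun x => Real.exp (2 * (if i = k then x else p i) + q (i + 1) - q (i - 1)))
          = fun _ => Real.exp (2 * p i + q (i + 1) - q (i - 1)) := by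
        funext x; rw [if_neg h]
      rw [hf, if_neg h]
      simpa using hasDerivAt_const (p k) (Real.exp (2 * p i + q (i + 1) - q (i - 1)))
  have key2 : ∀ i ∈ Finset.Icc 1 (2 * n - 2), HasDerivAt
      (fun x => Real.exp ((if i = k then x else p i) + (if i + 1 = k then x else p (i + 1))
          + (q (i + 2) + q (i + 1) - q i - q (i - 1)) / 2))
      ((if i = k then Real.exp (p i + p (i + 1) + (q (i + 2) + q (i + 1) - q i - q (i - 1)) / 2) else 0)
        + (if i = k - 1 then Real.exp (p i + p (i + 1) + (q (i + 2) + q (i + 1) - q i - q (i - 1)) / 2) else 0))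
      (p k) := by
    intro i hi
    simp only [Finset.mem_Icc] at hi
    by_cases h : i = k
    · have h2 : ¬ (i + 1 = k) := by omega
      have hf : (fun x => Real.exp ((if i = k then x else p i) + (if i + 1 = k then x else p (i + 1))
            + (q (i + 2) + q (i + 1) - q i - q (i - 1)) / 2))
          = fun x => Real.exp (x + p (i + 1) + (q (i + 2) + q (i + 1) - q i - q (i - 1)) / 2) := by
        funext x; rw [if_pos h, if_neg h2]
      rw [hf, if_pos h, if_neg (show ¬ i = k - 1 by omega)]
      have H : HasDerivAt
          (fun x => Real.exp (x + p (i + 1) + (q (i + 2) + q (i + 1) - q i - q (i - 1)) / 2))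
          (Real.exp (p k + p (i + 1) + (q (i + 2) + q (i + 1) - q i - q (i - 1)) / 2) * 1) (p k) :=
        (((hasDerivAt_id' (p k)).add_const (p (i + 1))).add_const _).exp
      convert H using 1
      rw [← h]; ring
    · by_cases h2 : i + 1 = k
      · have hf : (fun x => Real.exp ((if i = k then x else p i) + (if i + 1 = k then x else p (i + 1))
              + (q (i + 2) + q (i + 1) - q i - q (i - 1)) / 2))
            = fun x => Real.exp (p i + x + (q (i + 2) + q (i + 1) - q i - q (i - 1)) / 2) := by
          funext x; rw [if_neg h, if_pos h2]
        rw [hf, if_neg h, if_pos (show i = k - 1 by omega)]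
        have H : HasDerivAt
            (fun x => Real.exp (p i + x + (q (i + 2) + q (i + 1) - q i - q (i - 1)) / 2))
            (Real.exp (p i + p k + (q (i + 2) + q (i + 1) - q i - q (i - 1)) / 2) * 1) (p k) :=
          (((hasDerivAt_id' (p k)).const_add (p i)).add_const _).exp
        convert H using 1
        rw [← h2]; ring
      · have hf : (fun x => Real.exp ((if i = k then x else p i) + (if i + 1 = k then x else p (i + 1))
              + (q (i + 2) + q (i + 1) - q i - q (i - 1)) / 2))
            = fun _ => Real.exp (p i + p (i + 1) + (q (i + 2) + q (i + 1) - q i - q (i - 1)) / 2) := by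
          funext x; rw [if_neg h, if_neg h2]
        rw [hf, if_neg h, if_neg (show ¬ i = k - 1 by omega)]
        simpa using hasDerivAt_const (p k)
          (Real.exp (p i + p (i + 1) + (q (i + 2) + q (i + 1) - q i - q (i - 1)) / 2))
  have H : HasDerivAt
      (fun x =>
        (1 / 2) * ∑ i ∈ Finset.Icc 1 (2 * n - 1),
            Real.exp (2 * (if i = k then x else p i) + q (i + 1) - q (i - 1))
        + ∑ i ∈ Finset.Icc 1 (2 * n - 2),
            Real.exp ((if i = k then x else p i) + (if i + 1 = k then x else p (i + 1))
              + (q (i + 2) + q (i + 1) - q i - q (i - 1)) / 2))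
      ((1 / 2) * ∑ i ∈ Finset.Icc 1 (2 * n - 1),
          (if i = k then 2 * Real.exp (2 * p i + q (i + 1) - q (i - 1)) else 0)
        + ∑ i ∈ Finset.Icc 1 (2 * n - 2),
          ((if i = k then Real.exp (p i + p (i + 1) + (q (i + 2) + q (i + 1) - q i - q (i - 1)) / 2) else 0)
            + (if i = k - 1 then Real.exp (p i + p (i + 1) + (q (i + 2) + q (i + 1) - q i - q (i - 1)) / 2) else 0)))
      (p k) := ((HasDerivAt.fun_sum key1).const_mul (1 / 2 : ℝ)).add (HasDerivAt.fun_sum key2)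
  rw [H.deriv, Finset.sum_ite_eq', Finset.sum_add_distrib, Finset.sum_ite_eq', Finset.sum_ite_eq',
    aa_mul, aa_mul]
  have hv := aa_sq n q p k
  rw [if_pos hk] at hv
  rw [if_pos hk, hv]
  ring

lemma derivq_h2 (n : ℕ) (q p : ℕ → ℝ) (k : ℕ) (hk : k ∈ Finset.Icc 1 (2 * n - 1)) :
    deriv (fun x => h2Ham n (Function.update q k x) p) (q k)
      = 1 / 2 * (aa n q p (k - 1) ^ 2 - aa n q p (k + 1) ^ 2)
        + (aa n q p (k - 2) * aa n q p (k - 2 + 1) + aa n q p (k - 1) * aa n q p (k - 1 + 1)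
            - aa n q p k * aa n q p (k + 1) - aa n q p (k + 1) * aa n q p (k + 1 + 1)) / 2 := by
  have hk' := Finset.mem_Icc.mp hk
  have hfun : (fun x => h2Ham n (Function.update q k x) p)
      = fun x =>
        (1 / 2) * ∑ i ∈ Finset.Icc 1 (2 * n - 1),
            Real.exp (2 * p i + (if i + 1 = k then x else q (i + 1))
              - (if i - 1 = k then x else q (i - 1)))
        + ∑ i ∈ Finset.Icc 1 (2 * n - 2),
            Real.exp (p i + p (i + 1) + ((if i + 2 = k then x else q (i + 2))
              + (if i + 1 = k then x else q (i + 1)) - (if i = k then x else q i)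
              - (if i - 1 = k then x else q (i - 1))) / 2) := by
    funext x; simp only [h2Ham, Function.update_apply]
  rw [hfun]
  have key1 : ∀ i ∈ Finset.Icc 1 (2 * n - 1), HasDerivAt
      (fun x => Real.exp (2 * p i + (if i + 1 = k then x else q (i + 1))
          - (if i - 1 = k then x else q (i - 1))))
      ((if i = k - 1 then Real.exp (2 * p i + q (i + 1) - q (i - 1)) else 0)
        - (if i = k + 1 then Real.exp (2 * p i + q (i + 1) - q (i - 1)) else 0)) (q k) := by
    intro i hi
    simp only [Finset.mem_Icc] at hi
    by_cases h1 : i + 1 = k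
    · have h2 : ¬ (i - 1 = k) := by omega
      have hf : (fun x => Real.exp (2 * p i + (if i + 1 = k then x else q (i + 1))
            - (if i - 1 = k then x else q (i - 1))))
          = fun x => Real.exp (2 * p i + x - q (i - 1)) := by
        funext x; rw [if_pos h1, if_neg h2]
      rw [hf, if_pos (show i = k - 1 by omega), if_neg (show ¬ i = k + 1 by omega)]
      have H : HasDerivAt (fun x => Real.exp (2 * p i + x - q (i - 1)))
          (Real.exp (2 * p i + q k - q (i - 1)) * 1) (q k) :=
        (((hasDerivAt_id' (q k)).const_add (2 * p i)).sub_const (q (i - 1))).exp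
      convert H using 1
      rw [← h1]; ring
    · by_cases h2 : i - 1 = k
      · have hf : (fun x => Real.exp (2 * p i + (if i + 1 = k then x else q (i + 1))
              - (if i - 1 = k then x else q (i - 1))))
            = fun x => Real.exp (2 * p i + q (i + 1) - x) := by
          funext x; rw [if_neg h1, if_pos h2]
        rw [hf, if_neg (show ¬ i = k - 1 by omega), if_pos (show i = k + 1 by omega)]
        have H : HasDerivAt (fun x => Real.exp (2 * p i + q (i + 1) - x))
            (Real.exp (2 * p i + q (i + 1) - q k) * (-1)) (q k) :=
          ((hasDerivAt_id' (q k)).const_sub (2 * p i + q (i + 1))).exp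
        convert H using 1
        rw [← h2]; ring
      · have hf : (fun x => Real.exp (2 * p i + (if i + 1 = k then x else q (i + 1))
              - (if i - 1 = k then x else q (i - 1))))
            = fun _ => Real.exp (2 * p i + q (i + 1) - q (i - 1)) := by
          funext x; rw [if_neg h1, if_neg h2]
        rw [hf, if_neg (show ¬ i = k - 1 by omega), if_neg (show ¬ i = k + 1 by omega)]
        simpa using hasDerivAt_const (q k) (Real.exp (2 * p i + q (i + 1) - q (i - 1)))
  have key2 : ∀ i ∈ Finset.Icc 1 (2 * n - 2), HasDerivAt
      (fun x => Real.exp (p i + p (i + 1) + ((if i + 2 = k then x else q (i + 2))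
          + (if i + 1 = k then x else q (i + 1)) - (if i = k then x else q i)
          - (if i - 1 = k then x else q (i - 1))) / 2))
      (((if i = k - 2 then Real.exp (p i + p (i + 1) + (q (i + 2) + q (i + 1) - q i - q (i - 1)) / 2) else 0)
        + (if i = k - 1 then Real.exp (p i + p (i + 1) + (q (i + 2) + q (i + 1) - q i - q (i - 1)) / 2) else 0)
        - (if i = k then Real.exp (p i + p (i + 1) + (q (i + 2) + q (i + 1) - q i - q (i - 1)) / 2) else 0)
        - (if i = k + 1 then Real.exp (p i + p (i + 1) + (q (i + 2) + q (i + 1) - q i - q (i - 1)) / 2) else 0)) / 2)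
      (q k) := by
    intro i hi
    simp only [Finset.mem_Icc] at hi
    by_cases c1 : i + 2 = k
    · have c2 : ¬ (i + 1 = k) := by omega
      have c3 : ¬ (i = k) := by omega
      have c4 : ¬ (i - 1 = k) := by omega
      have hf : (fun x => Real.exp (p i + p (i + 1) + ((if i + 2 = k then x else q (i + 2))
            + (if i + 1 = k then x else q (i + 1)) - (if i = k then x else q i)
            - (if i - 1 = k then x else q (i - 1))) / 2))
          = fun x => Real.exp (p i + p (i + 1) + (x + q (i + 1) - q i - q (i - 1)) / 2) := by
        funext x; rw [if_pos c1, if_neg c2, if_neg c3, if_neg c4]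
      rw [hf, if_pos (show i = k - 2 by omega), if_neg (show ¬ i = k - 1 by omega),
        if_neg c3, if_neg (show ¬ i = k + 1 by omega)]
      have H : HasDerivAt (fun x => Real.exp (p i + p (i + 1) + (x + q (i + 1) - q i - q (i - 1)) / 2))
          (Real.exp (p i + p (i + 1) + (q k + q (i + 1) - q i - q (i - 1)) / 2) * (1 / 2)) (q k) :=
        ((((((hasDerivAt_id' (q k)).add_const (q (i + 1))).sub_const (q i)).sub_const
          (q (i - 1))).div_const 2).const_add (p i + p (i + 1))).exp
      convert H using 1
      rw [← c1]; ring
    · by_cases c2 : i + 1 = k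
      · have c3 : ¬ (i = k) := by omega
        have c4 : ¬ (i - 1 = k) := by omega
        have hf : (fun x => Real.exp (p i + p (i + 1) + ((if i + 2 = k then x else q (i + 2))
              + (if i + 1 = k then x else q (i + 1)) - (if i = k then x else q i)
              - (if i - 1 = k then x else q (i - 1))) / 2))
            = fun x => Real.exp (p i + p (i + 1) + (q (i + 2) + x - q i - q (i - 1)) / 2) := by
          funext x; rw [if_neg c1, if_pos c2, if_neg c3, if_neg c4]
        rw [hf, if_neg (show ¬ i = k - 2 by omega), if_pos (show i = k - 1 by omega),
          if_neg c3, if_neg (show ¬ i = k + 1 by omega)]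
        have H : HasDerivAt (fun x => Real.exp (p i + p (i + 1) + (q (i + 2) + x - q i - q (i - 1)) / 2))
            (Real.exp (p i + p (i + 1) + (q (i + 2) + q k - q i - q (i - 1)) / 2) * (1 / 2)) (q k) :=
          ((((((hasDerivAt_id' (q k)).const_add (q (i + 2))).sub_const (q i)).sub_const
            (q (i - 1))).div_const 2).const_add (p i + p (i + 1))).exp
        convert H using 1
        rw [← c2]; ring
      · by_cases c3 : i = k
        · have c4 : ¬ (i - 1 = k) := by omega
          have hf : (fun x => Real.exp (p i + p (i + 1) + ((if i + 2 = k then x else q (i + 2))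
                + (if i + 1 = k then x else q (i + 1)) - (if i = k then x else q i)
                - (if i - 1 = k then x else q (i - 1))) / 2))
              = fun x => Real.exp (p i + p (i + 1) + (q (i + 2) + q (i + 1) - x - q (i - 1)) / 2) := by
            funext x; rw [if_neg c1, if_neg c2, if_pos c3, if_neg c4]
          rw [hf, if_neg (show ¬ i = k - 2 by omega), if_neg (show ¬ i = k - 1 by omega),
            if_pos c3, if_neg (show ¬ i = k + 1 by omega)]
          have H : HasDerivAt (fun x => Real.exp (p i + p (i + 1) + (q (i + 2) + q (i + 1) - x - q (i - 1)) / 2))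
              (Real.exp (p i + p (i + 1) + (q (i + 2) + q (i + 1) - q k - q (i - 1)) / 2) * (-1 / 2)) (q k) :=
            (((((hasDerivAt_id' (q k)).const_sub (q (i + 2) + q (i + 1))).sub_const
              (q (i - 1))).div_const 2).const_add (p i + p (i + 1))).exp
          convert H using 1
          rw [← c3]; ring
        · by_cases c4 : i - 1 = k
          · have hf : (fun x => Real.exp (p i + p (i + 1) + ((if i + 2 = k then x else q (i + 2))
                  + (if i + 1 = k then x else q (i + 1)) - (if i = k then x else q i)
                  - (if i - 1 = k then x else q (i - 1))) / 2))
                = fun x => Real.exp (p i + p (i + 1) + (q (i + 2) + q (i + 1) - q i - x) / 2) := by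
              funext x; rw [if_neg c1, if_neg c2, if_neg c3, if_pos c4]
            rw [hf, if_neg (show ¬ i = k - 2 by omega), if_neg (show ¬ i = k - 1 by omega),
              if_neg c3, if_pos (show i = k + 1 by omega)]
            have H : HasDerivAt (fun x => Real.exp (p i + p (i + 1) + (q (i + 2) + q (i + 1) - q i - x) / 2))
                (Real.exp (p i + p (i + 1) + (q (i + 2) + q (i + 1) - q i - q k) / 2) * (-1 / 2)) (q k) :=
              ((((hasDerivAt_id' (q k)).const_sub (q (i + 2) + q (i + 1) - q i)).div_const
                2).const_add (p i + p (i + 1))).exp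
            convert H using 1
            rw [← c4]; ring
          · have hf : (fun x => Real.exp (p i + p (i + 1) + ((if i + 2 = k then x else q (i + 2))
                  + (if i + 1 = k then x else q (i + 1)) - (if i = k then x else q i)
                  - (if i - 1 = k then x else q (i - 1))) / 2))
                = fun _ => Real.exp (p i + p (i + 1) + (q (i + 2) + q (i + 1) - q i - q (i - 1)) / 2) := by
              funext x; rw [if_neg c1, if_neg c2, if_neg c3, if_neg c4]
            rw [hf, if_neg (show ¬ i = k - 2 by omega), if_neg (show ¬ i = k - 1 by omega),
              if_neg c3, if_neg (show ¬ i = k + 1 by omega)]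
            simpa using hasDerivAt_const (q k)
              (Real.exp (p i + p (i + 1) + (q (i + 2) + q (i + 1) - q i - q (i - 1)) / 2))
  have H : HasDerivAt
      (fun x =>
        (1 / 2) * ∑ i ∈ Finset.Icc 1 (2 * n - 1),
            Real.exp (2 * p i + (if i + 1 = k then x else q (i + 1))
              - (if i - 1 = k then x else q (i - 1)))
        + ∑ i ∈ Finset.Icc 1 (2 * n - 2),
            Real.exp (p i + p (i + 1) + ((if i + 2 = k then x else q (i + 2))
              + (if i + 1 = k then x else q (i + 1)) - (if i = k then x else q i)
              - (if i - 1 = k then x else q (i - 1))) / 2))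
      ((1 / 2) * ∑ i ∈ Finset.Icc 1 (2 * n - 1),
          ((if i = k - 1 then Real.exp (2 * p i + q (i + 1) - q (i - 1)) else 0)
            - (if i = k + 1 then Real.exp (2 * p i + q (i + 1) - q (i - 1)) else 0))
        + ∑ i ∈ Finset.Icc 1 (2 * n - 2),
          (((if i = k - 2 then Real.exp (p i + p (i + 1) + (q (i + 2) + q (i + 1) - q i - q (i - 1)) / 2) else 0)
            + (if i = k - 1 then Real.exp (p i + p (i + 1) + (q (i + 2) + q (i + 1) - q i - q (i - 1)) / 2) else 0)
            - (if i = k then Real.exp (p i + p (i + 1) + (q (i + 2) + q (i + 1) - q i - q (i - 1)) / 2) else 0)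
            - (if i = k + 1 then Real.exp (p i + p (i + 1) + (q (i + 2) + q (i + 1) - q i - q (i - 1)) / 2) else 0)) / 2))
      (q k) := ((HasDerivAt.fun_sum key1).const_mul (1 / 2 : ℝ)).add (HasDerivAt.fun_sum key2)
  rw [H.deriv, Finset.sum_sub_distrib, Finset.sum_ite_eq', Finset.sum_ite_eq',
    ← Finset.sum_div, Finset.sum_sub_distrib, Finset.sum_sub_distrib, Finset.sum_add_distrib,
    Finset.sum_ite_eq', Finset.sum_ite_eq', Finset.sum_ite_eq', Finset.sum_ite_eq',
    aa_sq, aa_sq, aa_mul, aa_mul, aa_mul, aa_mul]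

lemma telescope_aux (T : ℕ → ℝ) (h0 : T 0 = 0) (m : ℕ) :
    ∑ k ∈ Finset.Icc 1 m, (T k - T (k - 2)) = T m + T (m - 1) := by
  induction m with
  | zero => simp [h0]
  | succ m ih =>
    rw [Finset.sum_Icc_succ_top (by omega), ih,
      show m + 1 - 2 = m - 1 from by omega, show m + 1 - 1 = m from by omega]
    ring

/-- shorthand for the telescoping triple product -/
noncomputable def tT (n : ℕ) (q p : ℕ → ℝ) (j : ℕ) : ℝ :=
  aa n q p j * aa n q p (j + 1) * aa n q p (j + 2)

/-- The pullback `h₁ = H₁ ∘ Ψ` of `H₁(u) = ∑ uᵢ` under the Volterra map equals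
`∑ᵢ exp(pᵢ + (1/2)(qᵢ₊₁ - qᵢ₋₁))`, and `h₁` Poisson-commutes with `h₂` with respect
to the canonical bracket on `ℝ^{2(2n-1)}`: `{h₁, h₂} = 0`. -/
theorem h1_pullback_and_commutes_with_h2 (n : ℕ) (hn : 0 < n) (q p : ℕ → ℝ)
    (hq0 : q 0 = 0) (hq2n : q (2 * n) = 0) :
    (∑ i ∈ Finset.Icc 1 (2 * n - 1), volterraU q p i) = h1Ham n q p ∧
    ∑ k ∈ Finset.Icc 1 (2 * n - 1),
        (deriv (fun x => h1Ham n (Function.update q k x) p) (q k)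
            * deriv (fun x => h2Ham n q (Function.update p k x)) (p k)
          - deriv (fun x => h1Ham n q (Function.update p k x)) (p k)
            * deriv (fun x => h2Ham n (Function.update q k x) p) (q k))
      = 0 := by
  constructor
  · rfl
  · have ha0 : aa n q p 0 = 0 := by simp [aa]
    have step : ∀ k ∈ Finset.Icc 1 (2 * n - 1),
        (deriv (fun x => h1Ham n (Function.update q k x) p) (q k)
            * deriv (fun x => h2Ham n q (Function.update p k x)) (p k)
          - deriv (fun x => h1Ham n q (Function.update p k x)) (p k)
            * deriv (fun x => h2Ham n (Function.update q k x) p) (q k))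
        = (tT n q p k - tT n q p (k - 2)) / 2 := by
      intro k hk
      rw [derivq_h1 n q p k hk, derivp_h2 n q p k hk, derivp_h1 n q p k,
        derivq_h2 n q p k hk, tT, tT]
      have hk' := Finset.mem_Icc.mp hk
      rcases Nat.lt_or_ge k 2 with h2 | h2
      · have hk1 : k = 1 := by omega
        subst hk1
        norm_num
        simp only [ha0]
        ring
      · obtain ⟨j, rfl⟩ : ∃ j, k = j + 2 := ⟨k - 2, by omega⟩
        simp only [show j + 2 - 1 = j + 1 from by omega, show j + 2 - 2 = j from by omega,
          show j + 1 + 1 = j + 2 from by omega, show j + 2 + 1 = j + 3 from by omega,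
          show j + 3 + 1 = j + 4 from by omega, show j + 2 + 2 = j + 4 from by omega]
        ring
    rw [Finset.sum_congr rfl step, ← Finset.sum_div,
      telescope_aux (tT n q p) (by simp [tT, ha0]) (2 * n - 1)]
    have e1 : aa n q p (2 * n) = 0 := by
      rw [aa, if_neg]; simp only [Finset.mem_Icc]; omega
    rw [tT, tT, show 2 * n - 1 + 1 = 2 * n from by omega,
      show 2 * n - 1 - 1 + 2 = 2 * n from by omega, e1]
    ring
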